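/- Let T be a Tambara functor on a finite group G and 𝔭 ⊊ T a proper ideal. Then 𝔭 is prime (in the element-wise sense on principal ideals of elements over transitive G-sets) if and only if for every pair of ideals 𝔦, 𝔧 ⊆ T, the containment 𝔦𝔧 ⊆ 𝔭 implies 𝔦 ⊆ 𝔭 or 𝔧 ⊆ 𝔭. -/

import Mathlib

set_option autoImplicit false

/-! Finite G-sets -/

structure GSet (G : Type) [Group G] : Type 1 where
  carrier : Type
  [mulAction : MulAction G carrier]
  [finite : Finite carrier]

attribute [instance] GSet.mulAction GSet.finite

/-- Equivariant maps of finite `G`-sets. -/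
structure GSetHom {G : Type} [Group G] (X Y : GSet G) : Type where
  toFun : X.carrier → Y.carrier
  map_smul : ∀ (g : G) (x : X.carrier), toFun (g • x) = g • toFun x

namespace GSetHom

variable {G : Type} [Group G]

def id (X : GSet G) : GSetHom X X := ⟨fun x => x, fun _ _ => rfl⟩

def comp {X Y Z : GSet G} (g : GSetHom Y Z) (f : GSetHom X Y) : GSetHom X Z :=
  ⟨fun x => g.toFun (f.toFun x), fun a x => by
    show g.toFun (f.toFun (a • x)) = a • g.toFun (f.toFun x)
    rw [f.map_smul, g.map_smul]⟩

end GSetHom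

namespace GSet

variable {G : Type} [Group G]

/-- Binary disjoint union of `G`-sets. -/
def sum (X Y : GSet G) : GSet G where
  carrier := X.carrier ⊕ Y.carrier

def inl (X Y : GSet G) : GSetHom X (X.sum Y) := ⟨Sum.inl, fun _ _ => rfl⟩

def inr (X Y : GSet G) : GSetHom Y (X.sum Y) := ⟨Sum.inr, fun _ _ => rfl⟩

instance : MulAction G Empty where
  smul _ x := x.elim
  one_smul x := x.elim
  mul_smul _ _ x := x.elim

/-- The empty `G`-set. -/
def empty (G : Type) [Group G] : GSet G where
  carrier := Empty

/-- Finite disjoint unions of `G`-sets. -/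
def sigma {n : ℕ} (Xs : Fin n → GSet G) : GSet G where
  carrier := Σ i, (Xs i).carrier

def sigmaIncl {n : ℕ} (Xs : Fin n → GSet G) (i : Fin n) : GSetHom (Xs i) (sigma Xs) :=
  ⟨fun x => ⟨i, x⟩, fun _ _ => rfl⟩

/-- The canonical pullback of two `G`-maps. -/
def pullback {X Y Z : GSet G} (f : GSetHom X Z) (g : GSetHom Y Z) : GSet G where
  carrier := { q : X.carrier × Y.carrier // f.toFun q.1 = g.toFun q.2 }
  mulAction :=
  { smul := fun a q => ⟨a • q.val, by
      show f.toFun (a • q.val.1) = g.toFun (a • q.val.2)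
      rw [f.map_smul, g.map_smul, q.property]⟩
    one_smul := fun q => Subtype.ext (one_smul G q.val)
    mul_smul := fun a b q => Subtype.ext (mul_smul a b q.val) }

def pbFst {X Y Z : GSet G} (f : GSetHom X Z) (g : GSetHom Y Z) :
    GSetHom (pullback f g) X := ⟨fun q => q.val.1, fun _ _ => rfl⟩

def pbSnd {X Y Z : GSet G} (f : GSetHom X Z) (g : GSetHom Y Z) :
    GSetHom (pullback f g) Y := ⟨fun q => q.val.2, fun _ _ => rfl⟩

/-- The complement of the image of a `G`-map, as a `G`-set. -/
def compl {X Y : GSet G} (f : GSetHom X Y) : GSet G where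
  carrier := { y : Y.carrier // ∀ x, f.toFun x ≠ y }
  mulAction :=
  { smul := fun g y => ⟨g • y.val, fun x h => y.property (g⁻¹ • x) (by
      rw [f.map_smul, h, inv_smul_smul])⟩
    one_smul := fun y => Subtype.ext (one_smul G y.val)
    mul_smul := fun a b y => Subtype.ext (mul_smul a b y.val) }

def complIncl {X Y : GSet G} (f : GSetHom X Y) : GSetHom (compl f) Y :=
  ⟨fun y => y.val, fun _ _ => rfl⟩

/-- Points of Tambara's dependent product `Π_f(A)`: pairs `(y, σ)` of a point `y : Y`
and a section `σ` of `p` on the fiber `f⁻¹(y)` (encoded as an `Option`-valued function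
supported exactly on the fiber). -/
def PiProp {X Y A : GSet G} (f : GSetHom X Y) (p : GSetHom A X)
    (s : Y.carrier × (X.carrier → Option A.carrier)) : Prop :=
  (∀ x, (s.2 x).isSome = true ↔ f.toFun x = s.1) ∧
  (∀ x a, s.2 x = some a → p.toFun a = x)

def PiCar {X Y A : GSet G} (f : GSetHom X Y) (p : GSetHom A X) : Type :=
  { s : Y.carrier × (X.carrier → Option A.carrier) // PiProp f p s }

instance optionFinite {α : Type} [Finite α] : Finite (Option α) :=
  Finite.of_equiv _ (Equiv.optionEquivSumPUnit.{0,0} α).symm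

instance piFinite {X Y A : GSet G} (f : GSetHom X Y) (p : GSetHom A X) :
    Finite (PiCar f p) := by
  unfold PiCar; infer_instance

def piSmul {X Y A : GSet G} (f : GSetHom X Y) (p : GSetHom A X) (g : G)
    (s : PiCar f p) : PiCar f p :=
  ⟨(g • s.val.1, fun x => (s.val.2 (g⁻¹ • x)).map (g • ·)), by
    constructor
    · intro x
      rw [Option.isSome_map, s.property.1 (g⁻¹ • x), f.map_smul]
      constructor
      · intro h; rw [← h, smul_inv_smul]
      · intro h; rw [h, inv_smul_smul]
    · intro x a ha
      rcases Option.map_eq_some_iff.mp ha with ⟨b, hb, rfl⟩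
      rw [p.map_smul, s.property.2 _ _ hb, smul_inv_smul]⟩

instance piAction {X Y A : GSet G} (f : GSetHom X Y) (p : GSetHom A X) :
    MulAction G (PiCar f p) where
  smul := piSmul f p
  one_smul s := by
    apply Subtype.ext
    refine Prod.ext (one_smul G s.val.1) ?_
    funext x
    show (s.val.2 ((1:G)⁻¹ • x)).map ((1:G) • ·) = s.val.2 x
    rw [inv_one, one_smul]
    cases h : s.val.2 x <;> simp [one_smul]
  mul_smul a b s := by
    apply Subtype.ext
    refine Prod.ext (mul_smul a b s.val.1) ?_
    funext x
    show (s.val.2 ((a * b)⁻¹ • x)).map ((a * b) • ·)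
        = ((s.val.2 (b⁻¹ • (a⁻¹ • x))).map (b • ·)).map (a • ·)
    rw [Option.map_map, mul_inv_rev, mul_smul]
    cases h : s.val.2 (b⁻¹ • a⁻¹ • x) <;> simp [mul_smul, Function.comp]

/-- Tambara's dependent product `Π_f(A)` as a `G`-set. -/
def piObj {X Y A : GSet G} (f : GSetHom X Y) (p : GSetHom A X) : GSet G where
  carrier := PiCar f p

/-- The projection `π : Π_f(A) → Y`. -/
def piPr {X Y A : GSet G} (f : GSetHom X Y) (p : GSetHom A X) :
    GSetHom (piObj f p) Y := ⟨fun s => s.val.1, fun _ _ => rfl⟩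

theorem optGet {α : Type} {o : Option α} {a : α} (h : o = some a) :
    ∀ hs : o.isSome = true, o.get hs = a := by subst h; intro _; rfl

/-- The evaluation map `λ : X ×_Y Π_f(A) → A`, `(x, (y, σ)) ↦ σ(x)`. -/
def piEval {X Y A : GSet G} (f : GSetHom X Y) (p : GSetHom A X) :
    GSetHom (pullback f (piPr f p)) A where
  toFun z := (z.val.2.val.2 z.val.1).get (by
    rw [z.val.2.property.1 z.val.1]; exact z.property)
  map_smul g z := by
    have hs : (z.val.2.val.2 z.val.1).isSome = true := by
      rw [z.val.2.property.1 z.val.1]; exact z.property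
    obtain ⟨a, ha⟩ := Option.isSome_iff_exists.mp hs
    have h1 : z.val.2.val.2 z.val.1 = some a := ha
    have h2 : (g • z).val.2.val.2 (g • z).val.1 = some (g • a) := by
      show (z.val.2.val.2 (g⁻¹ • (g • z.val.1))).map (g • ·) = some (g • a)
      rw [inv_smul_smul, h1]; rfl
    simp only [optGet h2, optGet h1]

end GSet

namespace GSet

/-- A transitive (nonempty) finite `G`-set. -/
def IsTransitive {G : Type} [Group G] (X : GSet G) : Prop :=
  Nonempty X.carrier ∧ MulAction.IsPretransitive G X.carrier

end GSet

/-! Tambara functors -/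

/-- The underlying system of commutative rings of a Tambara functor. -/
structure TamData (G : Type) [Group G] : Type 1 where
  obj : GSet G → Type
  ring : ∀ X, CommRing (obj X)

attribute [instance] TamData.ring

/-- A Tambara functor on the finite group `G`: a system of commutative rings `obj X`
indexed by finite `G`-sets, together with restrictions `res`, additive transfers `tr`
and multiplicative transfers `nm`, functorial, additive, satisfying the Mackey
base-change conditions, the projection formula, and Tambara's distributive law. -/
structure TambaraFunctor (G : Type) [Group G] extends TamData G where
  res : ∀ {X Y : GSet G}, GSetHom X Y → (obj Y →+* obj X)
  tr : ∀ {X Y : GSet G}, GSetHom X Y → (obj X →+ obj Y)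
  nm : ∀ {X Y : GSet G}, GSetHom X Y → (obj X →* obj Y)
  res_id : ∀ {X : GSet G} (x : obj X), res (GSetHom.id X) x = x
  res_comp : ∀ {X Y Z : GSet G} (f : GSetHom X Y) (g : GSetHom Y Z) (z : obj Z),
    res f (res g z) = res (g.comp f) z
  tr_id : ∀ {X : GSet G} (x : obj X), tr (GSetHom.id X) x = x
  tr_comp : ∀ {X Y Z : GSet G} (f : GSetHom X Y) (g : GSetHom Y Z) (x : obj X),
    tr g (tr f x) = tr (g.comp f) x
  nm_id : ∀ {X : GSet G} (x : obj X), nm (GSetHom.id X) x = x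
  nm_comp : ∀ {X Y Z : GSet G} (f : GSetHom X Y) (g : GSetHom Y Z) (x : obj X),
    nm g (nm f x) = nm (g.comp f) x
  /-- additivity on binary disjoint unions -/
  add_bij : ∀ X Y : GSet G, Function.Bijective
    (fun t : obj (X.sum Y) => (res (GSet.inl X Y) t, res (GSet.inr X Y) t))
  /-- `T(∅)` is the zero ring -/
  empty_subsingleton : ∀ x y : obj (GSet.empty G), x = y
  /-- Mackey base change for the additive transfer -/
  tr_bc : ∀ {X Y Z : GSet G} (f : GSetHom X Z) (g : GSetHom Y Z) (x : obj X),
    res g (tr f x) = tr (GSet.pbSnd f g) (res (GSet.pbFst f g) x)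
  /-- Mackey base change for the multiplicative transfer -/
  nm_bc : ∀ {X Y Z : GSet G} (f : GSetHom X Z) (g : GSetHom Y Z) (x : obj X),
    res g (nm f x) = nm (GSet.pbSnd f g) (res (GSet.pbFst f g) x)
  /-- the projection formula -/
  proj_formula : ∀ {X Y : GSet G} (f : GSetHom X Y) (a : obj X) (b : obj Y),
    tr f (a * res f b) = tr f a * b
  /-- the norm of zero is the additive transfer of `1` from the complement of the image -/
  nm_zero : ∀ {X Y : GSet G} (f : GSetHom X Y), nm f (0 : obj X) = tr (GSet.complIncl f) 1
  /-- Tambara's distributive law, via the canonical exponential diagram on `Π_f(A)` -/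
  distrib : ∀ {X Y A : GSet G} (f : GSetHom X Y) (p : GSetHom A X) (a : obj A),
    nm f (tr p a) = tr (GSet.piPr f p)
      (nm (GSet.pbSnd f (GSet.piPr f p)) (res (GSet.piEval f p) a))

namespace TambaraFunctor

variable {G : Type} [Group G]

/-- `f_!(x) = f_•(x) - f_•(0)`. -/
def shriek (T : TambaraFunctor G) {X Y : GSet G} (f : GSetHom X Y) (x : T.obj X) :
    T.obj Y := T.nm f x - T.nm f 0

end TambaraFunctor

/-- A morphism of Tambara functors: a family of ring homomorphisms natural with respect
to restrictions, additive transfers and multiplicative transfers. -/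
structure TamHom {G : Type} [Group G] (T S : TambaraFunctor G) where
  app : ∀ X : GSet G, T.obj X →+* S.obj X
  app_res : ∀ {X Y : GSet G} (f : GSetHom X Y) (y : T.obj Y),
    app X (T.res f y) = S.res f (app Y y)
  app_tr : ∀ {X Y : GSet G} (f : GSetHom X Y) (x : T.obj X),
    app Y (T.tr f x) = S.tr f (app X x)
  app_nm : ∀ {X Y : GSet G} (f : GSetHom X Y) (x : T.obj X),
    app Y (T.nm f x) = S.nm f (app X x)

namespace TambaraFunctor

variable {G : Type} [Group G]

/-- An ideal of a Tambara functor: a family of ideals closed under restrictions,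
additive transfers, and satisfying `f_•(𝔦(X)) ⊆ f_•(0) + 𝔦(Y)`
(equivalently, closed under `f_!`). -/
structure IsIdeal (T : TambaraFunctor G) (I : ∀ X : GSet G, Ideal (T.obj X)) : Prop where
  res_mem : ∀ {X Y : GSet G} (f : GSetHom X Y) {y : T.obj Y}, y ∈ I Y → T.res f y ∈ I X
  tr_mem : ∀ {X Y : GSet G} (f : GSetHom X Y) {x : T.obj X}, x ∈ I X → T.tr f x ∈ I Y
  shriek_mem : ∀ {X Y : GSet G} (f : GSetHom X Y) {x : T.obj X},
    x ∈ I X → T.shriek f x ∈ I Y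

/-- The ideal generated by a family of subsets: the intersection of all ideals
containing it. -/
def gen (T : TambaraFunctor G) (S : ∀ X : GSet G, Set (T.obj X)) (X : GSet G) :
    Ideal (T.obj X) :=
  ⨅ (I : ∀ Y : GSet G, Ideal (T.obj Y)) (_ : T.IsIdeal I) (_ : ∀ Y, S Y ⊆ ↑(I Y)), I X

/-- The family of subsets consisting of the single element `a ∈ T(A)`. -/
def single (T : TambaraFunctor G) (A : GSet G) (a : T.obj A) (X : GSet G) :
    Set (T.obj X) := { x | ∃ h : A = X, h ▸ a = x }

/-- The principal ideal `⟨a⟩` generated by `a ∈ T(A)`. -/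
def principal (T : TambaraFunctor G) (A : GSet G) (a : T.obj A) :
    ∀ X : GSet G, Ideal (T.obj X) := T.gen (T.single A a)

/-- The defining set of the product of two ideals. -/
def mulSet (T : TambaraFunctor G) (I J : ∀ X : GSet G, Ideal (T.obj X)) (X : GSet G) :
    Set (T.obj X) :=
  { x | ∃ (A : GSet G) (p : GSetHom A X) (a b : T.obj A),
      a ∈ I A ∧ b ∈ J A ∧ x = T.tr p (a * b) }

/-- The product of two ideals of a Tambara functor. -/
def mulIdl (T : TambaraFunctor G) (I J : ∀ X : GSet G, Ideal (T.obj X)) (X : GSet G) :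
    Ideal (T.obj X) := Ideal.span (T.mulSet I J X)

/-- Iterated products of ideals. -/
def mulMulti (T : TambaraFunctor G) :
    List (∀ X : GSet G, Ideal (T.obj X)) → ∀ X : GSet G, Ideal (T.obj X)
  | [] => fun _ => ⊤
  | I :: ls => T.mulIdl I (T.mulMulti ls)

/-- A prime ideal of a Tambara functor. -/
structure IsPrime (T : TambaraFunctor G) (P : ∀ X : GSet G, Ideal (T.obj X)) : Prop where
  isIdeal : T.IsIdeal P
  ne_top : ∃ X : GSet G, P X ≠ ⊤
  mem_or_mem : ∀ {X Y : GSet G}, X.IsTransitive → Y.IsTransitive →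
    ∀ {a : T.obj X} {b : T.obj Y},
      (∀ Z : GSet G, T.mulIdl (T.principal X a) (T.principal Y b) Z ≤ P Z) →
      a ∈ P X ∨ b ∈ P Y

/-- A maximal ideal of a Tambara functor. -/
structure IsMaximal (T : TambaraFunctor G) (M : ∀ X : GSet G, Ideal (T.obj X)) : Prop where
  isIdeal : T.IsIdeal M
  ne_top : ∃ X : GSet G, M X ≠ ⊤
  eq_of_le : ∀ K : ∀ X : GSet G, Ideal (T.obj X), T.IsIdeal K →
    (∀ X, M X ≤ K X) → (K = M ∨ ∀ X, K X = ⊤)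

end TambaraFunctor

namespace GSet

/-- The `G`-set `G/e`, i.e. `G` with the left regular action. -/
def regular (G : Type) [Group G] [Finite G] : GSet G where
  carrier := G

/-- Right multiplication `G/e → G/e`, an equivariant map. -/
def rightMul {G : Type} [Group G] [Finite G] (g : G) :
    GSetHom (regular G) (regular G) :=
  ⟨fun x => (id x : G) * g, fun a x => mul_assoc a x g⟩

end GSet


/-! ### Auxiliary lemmas -/

section Helpers

open scoped Classical

variable {G : Type} [Group G]

theorem gshom_ext {X Y : GSet G} {f g : GSetHom X Y} (h : f.toFun = g.toFun) : f = g := by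
  cases f; cases g; cases h; rfl

def toEmptyHom {X : GSet G} (h : ¬ Nonempty X.carrier) : GSetHom X (GSet.empty G) :=
  ⟨fun x => absurd ⟨x⟩ h, fun g x => absurd ⟨x⟩ h⟩

def fromEmptyHom {X : GSet G} : GSetHom (GSet.empty G) X :=
  ⟨fun x => x.elim, fun g x => x.elim⟩

theorem eq_zero_of_empty (T : TambaraFunctor G) {X : GSet G} (h : ¬ Nonempty X.carrier)
    (a : T.obj X) : a = 0 := by
  have hcomp : (fromEmptyHom (X := X)).comp (toEmptyHom h) = GSetHom.id X :=
    gshom_ext (funext fun x => absurd ⟨x⟩ h)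
  have h1 : a = T.res (toEmptyHom h) (T.res fromEmptyHom a) := by
    rw [T.res_comp, hcomp, T.res_id]
  have h2 : T.res (fromEmptyHom (X := X)) a = T.res (fromEmptyHom (X := X)) 0 :=
    T.empty_subsingleton _ _
  rw [h1, h2, map_zero, map_zero]

/-- The map `compl (inr) → X`. -/
def complInrToLeft (X Y : GSet G) : GSetHom (GSet.compl (GSet.inr X Y)) X where
  toFun c := match c with
    | ⟨Sum.inl x, _⟩ => x
    | ⟨Sum.inr y, h⟩ => absurd rfl (h y)
  map_smul g c := by
    obtain ⟨s, hs⟩ := c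
    cases s with
    | inl x => rfl
    | inr y => exact absurd rfl (hs y)

/-- The map `compl (inl) → Y`. -/
def complInlToRight (X Y : GSet G) : GSetHom (GSet.compl (GSet.inl X Y)) Y where
  toFun c := match c with
    | ⟨Sum.inr y, _⟩ => y
    | ⟨Sum.inl x, h⟩ => absurd rfl (h x)
  map_smul g c := by
    obtain ⟨s, hs⟩ := c
    cases s with
    | inr y => rfl
    | inl x => exact absurd rfl (hs x)

theorem complInr_eq (X Y : GSet G) :
    (GSet.inl X Y).comp (complInrToLeft X Y) = GSet.complIncl (GSet.inr X Y) := by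
  apply gshom_ext; funext c
  obtain ⟨s, hs⟩ := c
  cases s with
  | inl x => rfl
  | inr y => exact absurd rfl (hs y)

theorem complInl_eq (X Y : GSet G) :
    (GSet.inr X Y).comp (complInlToRight X Y) = GSet.complIncl (GSet.inl X Y) := by
  apply gshom_ext; funext c
  obtain ⟨s, hs⟩ := c
  cases s with
  | inr y => rfl
  | inl x => exact absurd rfl (hs x)

/-- Key lemma: membership in an ideal over a binary disjoint union is detected
on the two summands. -/
theorem sumMemIdeal (T : TambaraFunctor G) {P : ∀ X : GSet G, Ideal (T.obj X)}
    (hP : T.IsIdeal P) {X Y : GSet G} {t : T.obj (X.sum Y)}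
    (h1 : T.res (GSet.inl X Y) t ∈ P X) (h2 : T.res (GSet.inr X Y) t ∈ P Y) :
    t ∈ P (X.sum Y) := by
  -- the idempotents
  have hpb1 : ¬ Nonempty (GSet.pullback (GSet.inr X Y) (GSet.inl X Y)).carrier := by
    rintro ⟨⟨⟨y, x⟩, hq⟩⟩; exact Sum.inr_ne_inl (show (Sum.inr y : X.carrier ⊕ Y.carrier) = Sum.inl x from hq)
  have hpb2 : ¬ Nonempty (GSet.pullback (GSet.inl X Y) (GSet.inr X Y)).carrier := by
    rintro ⟨⟨⟨x, y⟩, hq⟩⟩; exact Sum.inl_ne_inr (show (Sum.inl x : X.carrier ⊕ Y.carrier) = Sum.inr y from hq)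
  have hc1 : ¬ Nonempty (GSet.compl (GSet.pbSnd (GSet.inr X Y) (GSet.inr X Y))).carrier := by
    rintro ⟨⟨y, hy⟩⟩
    exact hy ⟨⟨y, y⟩, rfl⟩ rfl
  have hc2 : ¬ Nonempty (GSet.compl (GSet.pbSnd (GSet.inl X Y) (GSet.inl X Y))).carrier := by
    rintro ⟨⟨x, hx⟩⟩
    exact hx ⟨⟨x, x⟩, rfl⟩ rfl
  have he1 : T.res (GSet.inl X Y) (T.nm (GSet.inr X Y) 0) = 1 := by
    rw [T.nm_bc, map_zero, (eq_zero_of_empty T hpb1 1).symm, map_one]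
  have he2 : T.res (GSet.inr X Y) (T.nm (GSet.inr X Y) 0) = 0 := by
    rw [T.nm_bc, map_zero, T.nm_zero, eq_zero_of_empty T hc1 1, map_zero]
  have he3 : T.res (GSet.inl X Y) (T.nm (GSet.inl X Y) 0) = 0 := by
    rw [T.nm_bc, map_zero, T.nm_zero, eq_zero_of_empty T hc2 1, map_zero]
  have he4 : T.res (GSet.inr X Y) (T.nm (GSet.inl X Y) 0) = 1 := by
    rw [T.nm_bc, map_zero, (eq_zero_of_empty T hpb2 1).symm, map_one]
  have hsum : T.nm (GSet.inr X Y) 0 + T.nm (GSet.inl X Y) 0 = 1 := by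
    apply (T.add_bij X Y).1
    show (T.res (GSet.inl X Y) _, T.res (GSet.inr X Y) _)
        = (T.res (GSet.inl X Y) 1, T.res (GSet.inr X Y) 1)
    rw [map_add, map_add, he1, he2, he3, he4, map_one, map_one]
    norm_num
  -- first summand
  have part1 : T.nm (GSet.inr X Y) 0 * t ∈ P (X.sum Y) := by
    have hres : T.res (GSet.complIncl (GSet.inr X Y)) t
        = T.res (complInrToLeft X Y) (T.res (GSet.inl X Y) t) := by
      rw [T.res_comp, complInr_eq]
    have hmem : T.res (GSet.complIncl (GSet.inr X Y)) t ∈ P (GSet.compl (GSet.inr X Y)) := by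
      rw [hres]; exact hP.res_mem _ h1
    have he : T.nm (GSet.inr X Y) 0 * t
        = T.tr (GSet.complIncl (GSet.inr X Y))
            (T.res (GSet.complIncl (GSet.inr X Y)) t) := by
      rw [T.nm_zero, ← T.proj_formula, one_mul]
    rw [he]; exact hP.tr_mem _ hmem
  have part2 : T.nm (GSet.inl X Y) 0 * t ∈ P (X.sum Y) := by
    have hres : T.res (GSet.complIncl (GSet.inl X Y)) t
        = T.res (complInlToRight X Y) (T.res (GSet.inr X Y) t) := by
      rw [T.res_comp, complInl_eq]
    have hmem : T.res (GSet.complIncl (GSet.inl X Y)) t ∈ P (GSet.compl (GSet.inl X Y)) := by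
      rw [hres]; exact hP.res_mem _ h2
    have he : T.nm (GSet.inl X Y) 0 * t
        = T.tr (GSet.complIncl (GSet.inl X Y))
            (T.res (GSet.complIncl (GSet.inl X Y)) t) := by
      rw [T.nm_zero, ← T.proj_formula, one_mul]
    rw [he]; exact hP.tr_mem _ hmem
  have ht : t = T.nm (GSet.inr X Y) 0 * t + T.nm (GSet.inl X Y) 0 * t := by
    rw [← add_mul, hsum, one_mul]
  rw [ht]
  exact Ideal.add_mem _ part1 part2

/-! ### Orbit decomposition -/

def subGSet (X : GSet G) (Q : X.carrier → Prop) (hQ : ∀ (g : G) x, Q x → Q (g • x)) :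
    GSet G where
  carrier := { x : X.carrier // Q x }
  mulAction :=
  { smul := fun g x => ⟨g • x.val, hQ g x.val x.property⟩
    one_smul := fun x => Subtype.ext (one_smul G x.val)
    mul_smul := fun a b x => Subtype.ext (mul_smul a b x.val) }

def orbGSet (X : GSet G) (x₀ : X.carrier) : GSet G :=
  subGSet X (fun x => ∃ g : G, g • x₀ = x)
    (fun g x hx => by
      obtain ⟨h, hh⟩ := hx
      exact ⟨g * h, by rw [mul_smul, hh]⟩)

def coOrbGSet (X : GSet G) (x₀ : X.carrier) : GSet G :=
  subGSet X (fun x => ¬ ∃ g : G, g • x₀ = x)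
    (fun g x hx hgx => by
      obtain ⟨h, hh⟩ := hgx
      exact hx ⟨g⁻¹ * h, by rw [mul_smul, hh, inv_smul_smul]⟩)

def sumToX (X : GSet G) (x₀ : X.carrier) :
    GSetHom ((orbGSet X x₀).sum (coOrbGSet X x₀)) X where
  toFun s := Sum.elim Subtype.val Subtype.val s
  map_smul g s := by
    cases s with
    | inl o => rfl
    | inr c => rfl

noncomputable def xToSum (X : GSet G) (x₀ : X.carrier) :
    GSetHom X ((orbGSet X x₀).sum (coOrbGSet X x₀)) where
  toFun x := if h : ∃ g : G, g • x₀ = x then Sum.inl ⟨x, h⟩ else Sum.inr ⟨x, h⟩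
  map_smul g x := by
    by_cases h : ∃ g' : G, g' • x₀ = x
    · have h2 : ∃ g' : G, g' • x₀ = g • x := by
        obtain ⟨k, hk⟩ := h
        exact ⟨g * k, by rw [mul_smul, hk]⟩
      refine (dif_pos h2).trans ?_
      exact (congrArg (fun s : ((orbGSet X x₀).sum (coOrbGSet X x₀)).carrier => g • s) (dif_pos (t := fun h => (Sum.inl ⟨x, h⟩ : ((orbGSet X x₀).sum (coOrbGSet X x₀)).carrier)) (e := fun h => (Sum.inr ⟨x, h⟩ : ((orbGSet X x₀).sum (coOrbGSet X x₀)).carrier)) h)).symm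
    · have h2 : ¬ ∃ g' : G, g' • x₀ = g • x := by
        rintro ⟨k, hk⟩
        exact h ⟨g⁻¹ * k, by rw [mul_smul, hk, inv_smul_smul]⟩
      refine (dif_neg h2).trans ?_
      exact (congrArg (fun s : ((orbGSet X x₀).sum (coOrbGSet X x₀)).carrier => g • s) (dif_neg (t := fun h => (Sum.inl ⟨x, h⟩ : ((orbGSet X x₀).sum (coOrbGSet X x₀)).carrier)) (e := fun h => (Sum.inr ⟨x, h⟩ : ((orbGSet X x₀).sum (coOrbGSet X x₀)).carrier)) h)).symm

theorem sumToX_xToSum (X : GSet G) (x₀ : X.carrier) :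
    (sumToX X x₀).comp (xToSum X x₀) = GSetHom.id X := by
  apply gshom_ext; funext x
  show Sum.elim Subtype.val Subtype.val
      (if h : ∃ g : G, g • x₀ = x then Sum.inl ⟨x, h⟩ else Sum.inr ⟨x, h⟩) = x
  by_cases h : ∃ g : G, g • x₀ = x
  · rw [dif_pos h]
    rfl
  · rw [dif_neg h]
    rfl

theorem orb_transitive (X : GSet G) (x₀ : X.carrier) : (orbGSet X x₀).IsTransitive := by
  refine ⟨⟨⟨x₀, ⟨1, one_smul G x₀⟩⟩⟩, ⟨fun p q => ?_⟩⟩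
  obtain ⟨y, gy, hy⟩ := p
  obtain ⟨z, gz, hz⟩ := q
  refine ⟨gz * gy⁻¹, Subtype.ext ?_⟩
  show (gz * gy⁻¹) • y = z
  rw [← hy, smul_smul, inv_mul_cancel_right]
  exact hz

/-- Restriction to some transitive piece detects non-membership. -/
theorem exists_transitive_res (T : TambaraFunctor G) {P : ∀ X : GSet G, Ideal (T.obj X)}
    (hP : T.IsIdeal P) :
    ∀ (n : ℕ) (X : GSet G), Nat.card X.carrier ≤ n → ∀ a : T.obj X, a ∉ P X →
      ∃ (O : GSet G) (f : GSetHom O X), O.IsTransitive ∧ T.res f a ∉ P O := by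
  intro n
  induction n with
  | zero =>
    intro X hX a ha
    exfalso
    apply ha
    have hemp : ¬ Nonempty X.carrier := by
      have h0 : Nat.card X.carrier = 0 := Nat.le_zero.mp hX
      rcases Nat.card_eq_zero.mp h0 with h | h
      · exact fun hn => h.false hn.some
      · exact absurd h (not_infinite_iff_finite.mpr X.finite)
    rw [eq_zero_of_empty T hemp a]
    exact zero_mem _
  | succ n ih =>
    intro X hX a ha
    by_cases hne : Nonempty X.carrier
    · by_cases htr : MulAction.IsPretransitive G X.carrier
      · exact ⟨X, GSetHom.id X, ⟨hne, htr⟩, by rwa [T.res_id]⟩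
      · have h2 : ¬ ∀ x y : X.carrier, ∃ g : G, g • x = y := fun h => htr ⟨h⟩
        push_neg at h2
        obtain ⟨x₀, x₁, h01⟩ := h2
        by_cases hO : T.res ((sumToX X x₀).comp (GSet.inl (orbGSet X x₀) (coOrbGSet X x₀))) a
            ∈ P (orbGSet X x₀)
        · have hC : T.res ((sumToX X x₀).comp (GSet.inr (orbGSet X x₀) (coOrbGSet X x₀))) a
              ∉ P (coOrbGSet X x₀) := by
            intro hmem
            apply ha
            have ht : T.res (sumToX X x₀) a ∈ P ((orbGSet X x₀).sum (coOrbGSet X x₀)) := by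
              apply sumMemIdeal T hP
              · rw [T.res_comp]; exact hO
              · rw [T.res_comp]; exact hmem
            have hres := hP.res_mem (xToSum X x₀) ht
            rwa [T.res_comp, sumToX_xToSum, T.res_id] at hres
          have hlt : Nat.card (coOrbGSet X x₀).carrier < Nat.card X.carrier :=
            Finite.card_subtype_lt (p := fun x => ¬ ∃ g : G, g • x₀ = x) (x := x₀)
              (not_not.mpr ⟨1, one_smul G x₀⟩)
          have hle : Nat.card (coOrbGSet X x₀).carrier ≤ n := by omega
          obtain ⟨O', f', htrans, hmem'⟩ := ih (coOrbGSet X x₀) hle _ hC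
          refine ⟨O', ((sumToX X x₀).comp
            (GSet.inr (orbGSet X x₀) (coOrbGSet X x₀))).comp f', htrans, ?_⟩
          rwa [← T.res_comp]
        · exact ⟨orbGSet X x₀,
            (sumToX X x₀).comp (GSet.inl (orbGSet X x₀) (coOrbGSet X x₀)),
            orb_transitive X x₀, hO⟩
    · exfalso
      apply ha
      rw [eq_zero_of_empty T hne a]
      exact zero_mem _

/-! ### Ideals generated by sets -/

theorem mem_gen_iff (T : TambaraFunctor G) (S : ∀ X : GSet G, Set (T.obj X)) (X : GSet G)
    (x : T.obj X) :
    x ∈ T.gen S X ↔ ∀ I : ∀ Y : GSet G, Ideal (T.obj Y),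
      T.IsIdeal I → (∀ Y, S Y ⊆ ↑(I Y)) → x ∈ I X := by
  constructor
  · intro hx I hI hS
    exact Submodule.mem_iInf _ |>.1 (Submodule.mem_iInf _ |>.1
      (Submodule.mem_iInf _ |>.1 hx I) hI) hS
  · intro h
    refine Submodule.mem_iInf _ |>.2 fun I => Submodule.mem_iInf _ |>.2 fun hI =>
      Submodule.mem_iInf _ |>.2 fun hS => h I hI hS

theorem isIdeal_gen (T : TambaraFunctor G) (S : ∀ X : GSet G, Set (T.obj X)) :
    T.IsIdeal (T.gen S) := by
  constructor
  · intro X Y f y hy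
    exact (mem_gen_iff T S _ _).mpr fun I hI hS =>
      hI.res_mem f ((mem_gen_iff T S _ _).mp hy I hI hS)
  · intro X Y f x hx
    exact (mem_gen_iff T S _ _).mpr fun I hI hS =>
      hI.tr_mem f ((mem_gen_iff T S _ _).mp hx I hI hS)
  · intro X Y f x hx
    exact (mem_gen_iff T S _ _).mpr fun I hI hS =>
      hI.shriek_mem f ((mem_gen_iff T S _ _).mp hx I hI hS)

theorem mem_principal_self (T : TambaraFunctor G) (A : GSet G) (a : T.obj A) :
    a ∈ T.principal A a A :=
  (mem_gen_iff T _ _ _).mpr fun I hI hS => hS A ⟨rfl, rfl⟩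

theorem principal_le (T : TambaraFunctor G) {I : ∀ X : GSet G, Ideal (T.obj X)}
    (hI : T.IsIdeal I) {A : GSet G} {a : T.obj A} (ha : a ∈ I A) (X : GSet G) :
    T.principal A a X ≤ I X := fun x hx =>
  (mem_gen_iff T _ _ _).mp hx I hI (fun Y s hs => by
    rcases hs with ⟨h, rfl⟩
    subst h
    exact ha)

theorem mulIdl_le (T : TambaraFunctor G) {I I' J J' : ∀ X : GSet G, Ideal (T.obj X)}
    (hI : ∀ X, I X ≤ I' X) (hJ : ∀ X, J X ≤ J' X) (X : GSet G) :
    T.mulIdl I J X ≤ T.mulIdl I' J' X := by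
  apply Ideal.span_mono
  rintro x ⟨A, p, a, b, ha, hb, hx⟩
  exact ⟨A, p, a, b, hI A ha, hJ A hb, hx⟩

end Helpers

/-- a proper ideal `𝔭` is prime iff for all ideals `𝔦, 𝔧`,
`𝔦𝔧 ⊆ 𝔭` implies `𝔦 ⊆ 𝔭` or `𝔧 ⊆ 𝔭`. -/
theorem isPrime_iff_ideal_mul (G : Type) [Group G] [Finite G] (T : TambaraFunctor G)
    (hT : ∃ X : GSet G, Nontrivial (T.obj X))
    (P : ∀ X : GSet G, Ideal (T.obj X)) (hP : T.IsIdeal P)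
    (hne : ∃ X : GSet G, P X ≠ ⊤) :
    T.IsPrime P ↔
      ∀ I J : ∀ X : GSet G, Ideal (T.obj X), T.IsIdeal I → T.IsIdeal J →
        (∀ X : GSet G, T.mulIdl I J X ≤ P X) →
        (∀ X : GSet G, I X ≤ P X) ∨ (∀ X : GSet G, J X ≤ P X) := by
  constructor
  · intro hPrime I J hI hJ hIJ
    by_contra hcon
    push_neg at hcon
    obtain ⟨hnI, hnJ⟩ := hcon
    obtain ⟨X, hX⟩ := hnI
    obtain ⟨Y, hY⟩ := hnJ
    obtain ⟨a, haI, haP⟩ := SetLike.not_le_iff_exists.mp hX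
    obtain ⟨b, hbJ, hbP⟩ := SetLike.not_le_iff_exists.mp hY
    obtain ⟨O₁, f₁, htr₁, hm₁⟩ :=
      exists_transitive_res T hP (Nat.card X.carrier) X le_rfl a haP
    obtain ⟨O₂, f₂, htr₂, hm₂⟩ :=
      exists_transitive_res T hP (Nat.card Y.carrier) Y le_rfl b hbP
    have ha' : T.res f₁ a ∈ I O₁ := hI.res_mem f₁ haI
    have hb' : T.res f₂ b ∈ J O₂ := hJ.res_mem f₂ hbJ
    have hsub : ∀ Z : GSet G,
        T.mulIdl (T.principal O₁ (T.res f₁ a)) (T.principal O₂ (T.res f₂ b)) Z ≤ P Z :=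
      fun Z => le_trans
        (mulIdl_le T (principal_le T hI ha') (principal_le T hJ hb') Z) (hIJ Z)
    rcases hPrime.mem_or_mem htr₁ htr₂ hsub with h | h
    · exact hm₁ h
    · exact hm₂ h
  · intro h
    refine ⟨hP, hne, ?_⟩
    intro X Y hX hY a b hab
    rcases h _ _ (isIdeal_gen T _) (isIdeal_gen T _) hab with hc | hc
    · exact Or.inl (hc X (mem_principal_self T X a))
    · exact Or.inr (hc Y (mem_principal_self T Y b))
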